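/- The language L_2lin = { a^{2n} b^{2n} : n ≥ 1 } over the alphabet {a,b} is not accepted by any (non-repetitive) nondeterministic finite automaton with translucent words (NFAwtw). -/

import Mathlib

/-! Repetitive (non)deterministic finite automata with translucent words. -/

/-- Behavior of the automaton at the end-of-tape marker: halt accepting,
halt rejecting, or (in the repetitive case) continue in one of a set of states. -/
inductive EndBehavior (Q : Type) : Type where
  | accept : EndBehavior Q
  | reject : EndBehavior Q
  | cont : Set Q → EndBehavior Q

/-- `InStar S w` means `w` belongs to the Kleene star `S*` of the set of words `S`. -/
def InStar {α : Type} (S : Set (List α)) (w : List α) : Prop :=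
  ∃ l : List (List α), (∀ u ∈ l, u ∈ S) ∧ l.flatten = w

/-- A (repetitive) nondeterministic finite automaton with translucent words,
with state set `Q` over the alphabet `α`.  `tl q` is the set `τ(q)` of
translucent words of the state `q`, `delta` is the transition function and
`endB q` is the behavior at the end-of-tape marker.  The fields `tl_fin`,
`code_ne`, `prefix_code` and `tl_head` express that each `τ(q)` is finite,
that `τ(q) ∪ Σ_q` is a prefix code (no empty word, and no member is a proper
prefix of another member), and that no word of `τ(q)` begins with a letter
readable in `q`. -/
structure RNFAwtw (α : Type) (Q : Type) : Type where
  init : Set Q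
  tl : Q → Set (List α)
  delta : Q → α → Set Q
  endB : Q → EndBehavior Q
  tl_fin : ∀ q, (tl q).Finite
  code_ne : ∀ q, [] ∉ tl q
  prefix_code : ∀ q,
    ∀ u ∈ tl q ∪ {w | ∃ a, (delta q a).Nonempty ∧ w = [a]},
    ∀ v ∈ tl q ∪ {w | ∃ a, (delta q a).Nonempty ∧ w = [a]},
      u <+: v → u = v
  tl_head : ∀ q, ∀ t ∈ tl q, ∀ a, (delta q a).Nonempty → ¬ [a] <+: t

/-- Configurations: a pair of a state and the remaining tape content, or one
of the two halting configurations. -/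
inductive Conf (α Q : Type) : Type where
  | state : Q → List α → Conf α Q
  | accept : Conf α Q
  | reject : Conf α Q

/-- The single-step computation relation of an RNFAwtw. -/
inductive RNFAwtw.Step {α Q : Type} (A : RNFAwtw α Q) :
    Conf α Q → Conf α Q → Prop where
  | read {q q' : Q} {a : α} {u v : List α} :
      InStar (A.tl q) u → q' ∈ A.delta q a →
      RNFAwtw.Step A (Conf.state q (u ++ a :: v)) (Conf.state q' (u ++ v))
  | stuck {q : Q} {a : α} {u v : List α} :
      InStar (A.tl q) u → A.delta q a = ∅ →
      (∀ t ∈ A.tl q, ¬ t <+: (a :: v)) →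
      RNFAwtw.Step A (Conf.state q (u ++ a :: v)) Conf.reject
  | haltAccept {q : Q} {w : List α} :
      InStar (A.tl q) w → A.endB q = EndBehavior.accept →
      RNFAwtw.Step A (Conf.state q w) Conf.accept
  | haltReject {q : Q} {w : List α} :
      InStar (A.tl q) w → A.endB q = EndBehavior.reject →
      RNFAwtw.Step A (Conf.state q w) Conf.reject
  | goOn {q q' : Q} {w : List α} {S : Set Q} :
      InStar (A.tl q) w → A.endB q = EndBehavior.cont S → q' ∈ S →
      RNFAwtw.Step A (Conf.state q w) (Conf.state q' w)

/-- `A` accepts the word `w`. -/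
def RNFAwtw.Accepts {α Q : Type} (A : RNFAwtw α Q) (w : List α) : Prop :=
  ∃ q0 ∈ A.init, Relation.ReflTransGen A.Step (Conf.state q0 w) Conf.accept

/-- The language accepted by `A`. -/
def RNFAwtw.lang {α Q : Type} (A : RNFAwtw α Q) : Set (List α) :=
  { w | A.Accepts w }

/-- `A` is deterministic: one initial state, at most one transition per
state/letter pair, and at the end-of-tape marker the continuation (if any)
is a single state. -/
def RNFAwtw.Deterministic {α Q : Type} (A : RNFAwtw α Q) : Prop :=
  (∃ q0, A.init = {q0}) ∧
  (∀ q a, (A.delta q a).Subsingleton) ∧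
  (∀ q S, A.endB q = EndBehavior.cont S → ∃ q', S = {q'})

/-- `A` is non-repetitive: at the end-of-tape marker it always halts. -/
def RNFAwtw.NonRepetitive {α Q : Type} (A : RNFAwtw α Q) : Prop :=
  ∀ q S, A.endB q ≠ EndBehavior.cont S

/-- `L` is accepted by some repetitive NFAwtw (with a finite state set). -/
def AcceptedByRNFAwtw {α : Type} (L : Set (List α)) : Prop :=
  ∃ (Q : Type) (_ : Finite Q) (A : RNFAwtw α Q), A.lang = L

/-- `L` is accepted by some repetitive DFAwtw. -/
def AcceptedByRDFAwtw {α : Type} (L : Set (List α)) : Prop :=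
  ∃ (Q : Type) (_ : Finite Q) (A : RNFAwtw α Q), A.Deterministic ∧ A.lang = L

/-- `L` is accepted by some (non-repetitive) NFAwtw. -/
def AcceptedByNFAwtw {α : Type} (L : Set (List α)) : Prop :=
  ∃ (Q : Type) (_ : Finite Q) (A : RNFAwtw α Q), A.NonRepetitive ∧ A.lang = L

/-- `L` is accepted by some (non-repetitive) DFAwtw. -/
def AcceptedByDFAwtw {α : Type} (L : Set (List α)) : Prop :=
  ∃ (Q : Type) (_ : Finite Q) (A : RNFAwtw α Q),
    A.NonRepetitive ∧ A.Deterministic ∧ A.lang = L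

/-- The two-letter alphabet `{a, b}`. -/
inductive Letter : Type where
  | a : Letter
  | b : Letter
deriving DecidableEq

instance : Fintype Letter :=
  ⟨{Letter.a, Letter.b}, fun x => by cases x <;> simp⟩

/-- The word `u^m` (the `m`-fold concatenation of `u`). -/
def wpow {α : Type} (u : List α) (m : ℕ) : List α :=
  (List.replicate m u).flatten

/-- `L_2lin = { a^{2n} b^{2n} : n ≥ 1 }`. -/
def L2lin : Set (List Letter) :=
  { w | ∃ n : ℕ, 1 ≤ n ∧
      w = List.replicate (2 * n) Letter.a ++ List.replicate (2 * n) Letter.b }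


/-! ### Auxiliary lemmas for the impossibility proof -/

section Aux

open Letter List

/-- A chain of `n` transitions all reading the letter `x`. -/
def AChain {α Q : Type} (A : RNFAwtw α Q) (x : α) (n : ℕ) (p r : Q) : Prop :=
  ∃ f : ℕ → Q, f 0 = p ∧ f n = r ∧ ∀ s, s < n → f (s + 1) ∈ A.delta (f s) x

lemma achain_refl {α Q : Type} (A : RNFAwtw α Q) (x : α) (q : Q) : AChain A x 0 q q :=
  ⟨fun _ => q, rfl, rfl, fun s hs => absurd hs (Nat.not_lt_zero s)⟩

lemma chain_cons {α Q : Type} (A : RNFAwtw α Q) {x : α} {n : ℕ} {p q' r : Q}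
    (hd : q' ∈ A.delta p x) (hc : AChain A x n q' r) : AChain A x (n + 1) p r := by
  obtain ⟨f, h0, hn, he⟩ := hc
  refine ⟨fun s => if s = 0 then p else f (s - 1), by simp, by simp [hn], ?_⟩
  intro s hs
  cases s with
  | zero => simpa [h0] using hd
  | succ s => simpa using he s (by omega)

lemma chain_of_repeat {α Q : Type} (A : RNFAwtw α Q) {x : α} {n : ℕ} (f : ℕ → Q)
    (he : ∀ s, s < n → f (s + 1) ∈ A.delta (f s) x) {r r' : ℕ}
    (hrr : r < r') (hr'n : r' ≤ n) (hf : f r = f r') :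
    ∃ d, 1 ≤ d ∧ AChain A x (n + d) (f 0) (f n) := by
  refine ⟨r' - r, by omega, fun s => if s < r' then f s else f (s - (r' - r)), ?_, ?_, ?_⟩
  · simp [show 0 < r' by omega]
  · have h1 : ¬ (n + (r' - r) < r') := by omega
    simp only [h1, if_false]
    rw [show n + (r' - r) - (r' - r) = n by omega]
  · intro s hs
    by_cases h1 : s + 1 < r'
    · simp only [h1, if_pos, show s < r' by omega, if_true]
      exact he s (by omega)
    · by_cases h2 : s < r'
      · have hs1 : s + 1 = r' := by omega
        simp only [h1, if_false, h2, if_true]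
        rw [show s + 1 - (r' - r) = r by omega, hf]
        exact hs1 ▸ he s (by omega)
      · simp only [h1, h2, if_false]
        rw [show s + 1 - (r' - r) = (s - (r' - r)) + 1 by omega]
        exact he (s - (r' - r)) (by omega)

lemma chain_pump {α Q : Type} [Fintype Q] (A : RNFAwtw α Q) {x : α} {n : ℕ} {p r : Q}
    (hc : AChain A x n p r) (hcard : Fintype.card Q < n + 1) :
    ∃ d, 1 ≤ d ∧ AChain A x (n + d) p r := by
  obtain ⟨f, h0, hn, he⟩ := hc
  obtain ⟨i, j, hij, hfij⟩ :=
    Fintype.exists_ne_map_eq_of_card_lt (fun s : Fin (n + 1) => f s.val) (by simpa using hcard)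
  rcases Nat.lt_or_ge i.val j.val with hlt | hge
  · obtain ⟨d, hd, hch⟩ := chain_of_repeat A f he hlt (by omega) hfij
    exact ⟨d, hd, h0 ▸ hn ▸ hch⟩
  · have hlt' : j.val < i.val := by
      rcases Nat.lt_or_ge j.val i.val with h | h
      · exact h
      · exact absurd (Fin.ext (by omega)) hij
    obtain ⟨d, hd, hch⟩ := chain_of_repeat A f he hlt' (by omega) hfij.symm
    exact ⟨d, hd, h0 ▸ hn ▸ hch⟩

lemma instar_nil {α Q : Type} (A : RNFAwtw α Q) (q : Q) : InStar (A.tl q) [] :=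
  ⟨[], by simp, rfl⟩

lemma reach_prepend {Q : Type} (A : RNFAwtw Letter Q) :
    ∀ (n : ℕ) (p qt : Q), AChain A Letter.a n p qt →
    ∀ v : List Letter, Relation.ReflTransGen A.Step (Conf.state qt v) Conf.accept →
    Relation.ReflTransGen A.Step (Conf.state p (List.replicate n Letter.a ++ v)) Conf.accept := by
  intro n
  induction n with
  | zero =>
    intro p qt hc v hv
    obtain ⟨f, h0, hn, _⟩ := hc
    have hpq : p = qt := h0.symm.trans hn
    simpa [hpq] using hv
  | succ n ih =>
    intro p qt hc v hv
    obtain ⟨f, h0, hn, he⟩ := hc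
    have e0 : f 1 ∈ A.delta p Letter.a := by rw [← h0]; exact he 0 (by omega)
    have hc' : AChain A Letter.a n (f 1) qt :=
      ⟨fun s => f (s + 1), rfl, hn, fun s hs => he (s + 1) (by omega)⟩
    have ih' := ih (f 1) qt hc' v hv
    have hstep : A.Step (Conf.state p (List.replicate (n + 1) Letter.a ++ v))
        (Conf.state (f 1) (List.replicate n Letter.a ++ v)) := by
      have h := RNFAwtw.Step.read (A := A) (q := p) (q' := f 1) (a := Letter.a)
        (u := ([] : List Letter)) (v := List.replicate n Letter.a ++ v)
        (instar_nil A p) e0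
      simpa [List.replicate_succ] using h
    exact Relation.ReflTransGen.head hstep ih'

lemma noRejectRun {Q : Type} (A : RNFAwtw Letter Q) :
    ¬ Relation.ReflTransGen A.Step Conf.reject Conf.accept := by
  intro h
  rcases h.cases_head with heq | ⟨c, hstep, _⟩
  · cases heq
  · cases hstep

lemma step_inv {Q : Type} (A : RNFAwtw Letter Q) {q : Q} {w : List Letter} {c : Conf Letter Q}
    (h : A.Step (Conf.state q w) c) :
    (∃ q' x u v, w = u ++ x :: v ∧ c = Conf.state q' (u ++ v) ∧ InStar (A.tl q) u ∧ q' ∈ A.delta q x)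
    ∨ c = Conf.reject
    ∨ (c = Conf.accept ∧ InStar (A.tl q) w ∧ A.endB q = EndBehavior.accept)
    ∨ (∃ (q' : Q) (S : Set Q), c = Conf.state q' w ∧ A.endB q = EndBehavior.cont S ∧ q' ∈ S) := by
  cases h with
  | read h1 h2 => exact Or.inl ⟨_, _, _, _, rfl, rfl, h1, h2⟩
  | stuck h1 h2 h3 => exact Or.inr (Or.inl rfl)
  | haltAccept h1 h2 => exact Or.inr (Or.inr (Or.inl ⟨rfl, h1, h2⟩))
  | haltReject h1 h2 => exact Or.inr (Or.inl rfl)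
  | goOn h1 h2 h3 => exact Or.inr (Or.inr (Or.inr ⟨_, _, rfl, h2, h3⟩))

lemma splitB : ∀ (j : ℕ) (u v : List Letter) (x : Letter),
    List.replicate j Letter.b = u ++ x :: v →
    x = Letter.b ∧ ∃ j1 j2, j = j1 + j2 + 1 ∧
      u = List.replicate j1 Letter.b ∧ v = List.replicate j2 Letter.b := by
  intro j
  induction j with
  | zero => intro u v x h; simp at h
  | succ j ih =>
    intro u v x h
    rw [List.replicate_succ] at h
    cases u with
    | nil =>
      simp only [List.nil_append] at h
      injection h with h1 h2
      exact ⟨h1.symm, 0, j, by omega, rfl, h2.symm⟩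
    | cons c u' =>
      simp only [List.cons_append] at h
      injection h with h1 h2
      subst h1
      obtain ⟨hx, j1, j2, hj, hu, hv⟩ := ih u' v x h2
      exact ⟨hx, j1 + 1, j2, by omega, by rw [List.replicate_succ, hu], hv⟩

lemma splitAB : ∀ (i j : ℕ) (u v : List Letter) (x : Letter),
    List.replicate i Letter.a ++ List.replicate j Letter.b = u ++ x :: v →
    (x = Letter.a ∧ ∃ i1 i2, i = i1 + i2 + 1 ∧ u = List.replicate i1 Letter.a ∧
        v = List.replicate i2 Letter.a ++ List.replicate j Letter.b)
    ∨ (x = Letter.b ∧ ∃ j1 j2, j = j1 + j2 + 1 ∧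
        u = List.replicate i Letter.a ++ List.replicate j1 Letter.b ∧
        v = List.replicate j2 Letter.b) := by
  intro i
  induction i with
  | zero =>
    intro j u v x h
    simp only [List.replicate_zero, List.nil_append] at h
    obtain ⟨hx, j1, j2, hj, hu, hv⟩ := splitB j u v x h
    exact Or.inr ⟨hx, j1, j2, hj, by simp [hu], hv⟩
  | succ i ih =>
    intro j u v x h
    rw [List.replicate_succ] at h
    cases u with
    | nil =>
      simp only [List.nil_append, List.cons_append] at h
      injection h with h1 h2
      subst h1
      exact Or.inl ⟨rfl, 0, i, by omega, rfl, h2.symm⟩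
    | cons c u' =>
      simp only [List.cons_append] at h
      injection h with h1 h2
      subst h1
      rcases ih j u' v x h2 with ⟨hx, i1, i2, hi, hu, hv⟩ | ⟨hx, j1, j2, hj, hu, hv⟩
      · exact Or.inl ⟨hx, i1 + 1, i2, by omega, by rw [List.replicate_succ, hu], hv⟩
      · exact Or.inr ⟨hx, j1, j2, hj,
          by rw [List.replicate_succ, List.cons_append, hu], hv⟩

lemma noBA : ∀ (p q : ℕ) (x z y : List Letter),
    List.replicate p Letter.a ++ List.replicate q Letter.b =
      x ++ Letter.b :: (z ++ Letter.a :: y) → False := by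
  intro p
  induction p with
  | zero =>
    intro q x z y h
    simp only [List.replicate_zero, List.nil_append] at h
    have ha : Letter.a ∈ List.replicate q Letter.b := by rw [h]; simp
    exact Letter.noConfusion (List.eq_of_mem_replicate ha)
  | succ p ih =>
    intro q x z y h
    rw [List.replicate_succ] at h
    cases x with
    | nil =>
      simp only [List.cons_append, List.nil_append] at h
      injection h with h1 _
      exact Letter.noConfusion h1
    | cons c x' =>
      simp only [List.cons_append] at h
      injection h with h1 h2
      exact ih q x' z y h2

/-- Main structural analysis of an accepting run on `a^i b^j`. -/
lemma main_analysis {Q : Type} (A : RNFAwtw Letter Q) (hNR : A.NonRepetitive) (j : ℕ) :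
    ∀ (i : ℕ) (q : Q),
      Relation.ReflTransGen A.Step
        (Conf.state q (List.replicate i Letter.a ++ List.replicate j Letter.b)) Conf.accept →
      ∃ t qt, AChain A Letter.a t q qt ∧
        ((∃ i' j' q', i = t + i' + 1 ∧ j = j' + 1 ∧ q' ∈ A.delta qt Letter.b ∧
            Relation.ReflTransGen A.Step
              (Conf.state q' (List.replicate (i' + 1) Letter.a ++ List.replicate j' Letter.b))
              Conf.accept) ∨
         (t = i ∧ Relation.ReflTransGen A.Step
              (Conf.state qt (List.replicate j Letter.b)) Conf.accept) ∨
         (∃ i', i = t + i' + 1 ∧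
            InStar (A.tl qt) (List.replicate (i' + 1) Letter.a ++ List.replicate j Letter.b) ∧
            A.endB qt = EndBehavior.accept)) := by
  intro i
  induction i with
  | zero =>
    intro q h
    exact ⟨0, q, achain_refl A Letter.a q, Or.inr (Or.inl ⟨rfl, by simpa using h⟩)⟩
  | succ i ih =>
    intro q h
    rcases h.cases_head with heq | ⟨c, hstep, hrun⟩
    · cases heq
    rcases step_inv A hstep with ⟨q', x, u, v, hw, hc, hu, hdel⟩ | hc | ⟨hc, hIn, hEnd⟩ |
      ⟨q', S, hc, hEnd, _⟩
    · subst hc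
      rcases splitAB (i + 1) j u v x hw with ⟨hx, i1, i2, hi, hu2, hv2⟩ |
        ⟨hx, j1, j2, hj, hu2, hv2⟩
      · subst hx; subst hu2; subst hv2
        have huv : List.replicate i1 Letter.a ++
            (List.replicate i2 Letter.a ++ List.replicate j Letter.b) =
            List.replicate i Letter.a ++ List.replicate j Letter.b := by
          rw [← List.append_assoc, ← List.replicate_add, show i1 + i2 = i by omega]
        rw [huv] at hrun
        obtain ⟨t, qt, hch, hcs⟩ := ih q' hrun
        refine ⟨t + 1, qt, chain_cons A hdel hch, ?_⟩
        rcases hcs with ⟨i', j', q'', h1, h2, h3, h4⟩ | ⟨h1, h2⟩ | ⟨i', h1, h2, h3⟩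
        · exact Or.inl ⟨i', j', q'', by omega, h2, h3, h4⟩
        · exact Or.inr (Or.inl ⟨by omega, h2⟩)
        · exact Or.inr (Or.inr ⟨i', by omega, h2, h3⟩)
      · subst hx; subst hu2; subst hv2
        have huv : (List.replicate (i + 1) Letter.a ++ List.replicate j1 Letter.b) ++
            List.replicate j2 Letter.b =
            List.replicate (i + 1) Letter.a ++ List.replicate (j1 + j2) Letter.b := by
          rw [List.append_assoc, ← List.replicate_add]
        rw [huv] at hrun
        exact ⟨0, q, achain_refl A Letter.a q,
          Or.inl ⟨i, j1 + j2, q', by omega, by omega, hdel, hrun⟩⟩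
    · subst hc; exact absurd hrun (noRejectRun A)
    · exact ⟨0, q, achain_refl A Letter.a q,
        Or.inr (Or.inr ⟨i, by omega, hIn, hEnd⟩)⟩
    · exact absurd hEnd (hNR _ S)

end Aux

/-- The language `L_2lin = { a^{2n} b^{2n} : n ≥ 1 }` is not accepted by any
(non-repetitive) nondeterministic finite automaton with translucent words. -/
theorem L2lin_not_accepted_by_NFAwtw : ¬ AcceptedByNFAwtw L2lin := by
  rintro ⟨Q, hQfin, A, hNR, hL⟩
  haveI : Fintype Q := Fintype.ofFinite Q
  set N := 2 * (Fintype.card Q + 1) with hN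
  have hwL : (List.replicate N Letter.a ++ List.replicate N Letter.b) ∈ L2lin :=
    ⟨Fintype.card Q + 1, by omega, rfl⟩
  rw [← hL] at hwL
  obtain ⟨q0, hq0, hrun⟩ := hwL
  obtain ⟨t, qt, hch, hcs⟩ := main_analysis A hNR N N q0 hrun
  rcases hcs with ⟨i', j', q', hi, hj, hdel, hr⟩ | ⟨ht, hr⟩ | ⟨i', hi, hIn, hEnd⟩
  · -- Case 1 : a `b` is read while at least one `a` remains on the tape.
    -- Then the automaton also accepts a word with a `b` before an `a`.
    have hstep0 : A.Step
        (Conf.state qt (Letter.b ::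
          (List.replicate (i' + 1) Letter.a ++ List.replicate j' Letter.b)))
        (Conf.state q'
          (List.replicate (i' + 1) Letter.a ++ List.replicate j' Letter.b)) := by
      have h := RNFAwtw.Step.read (A := A) (q := qt) (q' := q') (a := Letter.b)
        (u := ([] : List Letter))
        (v := List.replicate (i' + 1) Letter.a ++ List.replicate j' Letter.b)
        (instar_nil A qt) hdel
      simpa using h
    have hacc := reach_prepend A t q0 qt hch _ (Relation.ReflTransGen.head hstep0 hr)
    have hmem : (List.replicate t Letter.a ++ Letter.b ::
        (List.replicate (i' + 1) Letter.a ++ List.replicate j' Letter.b)) ∈ L2lin := by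
      rw [← hL]; exact ⟨q0, hq0, hacc⟩
    obtain ⟨m, _, hm2⟩ := hmem
    refine noBA (2 * m) (2 * m) (List.replicate t Letter.a) []
      (List.replicate i' Letter.a ++ List.replicate j' Letter.b) ?_
    rw [← hm2]
    simp [List.replicate_succ]
  · -- Case 2 : all `a`s are read before any `b`.  Pump the chain of `a`-transitions.
    subst ht
    have hcard : Fintype.card Q < N + 1 := by omega
    obtain ⟨d, hd1, hch'⟩ := chain_pump A hch hcard
    have hacc := reach_prepend A (N + d) q0 qt hch' _ hr
    have hmem : (List.replicate (N + d) Letter.a ++ List.replicate N Letter.b) ∈ L2lin := by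
      rw [← hL]; exact ⟨q0, hq0, hacc⟩
    obtain ⟨m, _, hm2⟩ := hmem
    have h1 := congrArg (List.count Letter.a) hm2
    have h2 := congrArg (List.count Letter.b) hm2
    simp [List.count_append, List.count_replicate] at h1 h2
    omega
  · -- Case 3 : the automaton halts accepting with both `a`s and `b`s left.
    -- Reorder the translucent-word decomposition to get a `b` before an `a`.
    obtain ⟨l, hl, hfl⟩ := hIn
    have ha : Letter.a ∈ l.flatten := by
      rw [hfl]; simp [List.mem_append, List.mem_replicate]
    have hb : Letter.b ∈ l.flatten := by
      rw [hfl]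
      have hN0 : N ≠ 0 := by omega
      simp [List.mem_append, List.mem_replicate, hN0]
    rw [List.mem_flatten] at ha hb
    obtain ⟨ua, hua, haa⟩ := ha
    obtain ⟨ub, hub, hbb⟩ := hb
    have hstar2 : InStar (A.tl qt) (ub ++ ua) := by
      refine ⟨[ub, ua], ?_, by simp⟩
      intro u hu
      simp only [List.mem_cons, List.not_mem_nil, or_false] at hu
      rcases hu with rfl | rfl
      · exact hl _ hub
      · exact hl _ hua
    have hstep0 : A.Step (Conf.state qt (ub ++ ua)) Conf.accept :=
      RNFAwtw.Step.haltAccept hstar2 hEnd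
    have hacc := reach_prepend A t q0 qt hch _ (Relation.ReflTransGen.single hstep0)
    have hmem : (List.replicate t Letter.a ++ (ub ++ ua)) ∈ L2lin := by
      rw [← hL]; exact ⟨q0, hq0, hacc⟩
    obtain ⟨m, _, hm2⟩ := hmem
    obtain ⟨x1, x2, hub2⟩ := List.append_of_mem hbb
    obtain ⟨y1, y2, hua2⟩ := List.append_of_mem haa
    refine noBA (2 * m) (2 * m) (List.replicate t Letter.a ++ x1) (x2 ++ y1) y2 ?_
    rw [← hm2, hub2, hua2]
    simp [List.append_assoc]
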